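/- Let s be a natural number and let M : Matrix (Fin s × G) (Fin s × G) R be a block matrix all of whose blocks are Hadamard matrices with eigenvalue zero: for all p, q ∈ Fin s there exists a p q : G → R such that M (p,i) (q,j) = a p q (i + j) for all i, j ∈ G, and moreover ∑_{g ∈ G} a p q g = 0 for all p, q. Then M^(2s) = 0. -/

import Mathlib

open Polynomial Finset

section Aux

variable {S : Type*} [CommRing S]

private lemma sq_sum_of_two_eq_zero (h2 : (2 : S) = 0) {ι : Type*} (t : Finset ι) (f : ι → S) :
    (∑ i ∈ t, f i) ^ 2 = ∑ i ∈ t, f i ^ 2 := by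
  induction t using Finset.cons_induction with
  | empty => simp
  | cons a t ha ih =>
    rw [Finset.sum_cons, Finset.sum_cons, add_sq, ih, h2]
    ring

private lemma matrix_pow_eq_zero_of_sq_entries (h2 : (2 : S) = 0) {s : ℕ}
    (N : Matrix (Fin s) (Fin s) S) (hN : ∀ p q, N p q ^ 2 = 0) :
    N ^ (2 * s) = 0 := by
  rcases subsingleton_or_nontrivial S with hS | hS
  · exact Subsingleton.elim _ _
  set I : Ideal S :=
    { carrier := {x | x ^ 2 = 0}
      add_mem' := by
        intro x y hx hy
        simp only [Set.mem_setOf_eq] at *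
        rw [add_sq, hx, hy, h2]
        ring
      zero_mem' := by simp
      smul_mem' := by
        intro c x hx
        simp only [Set.mem_setOf_eq, smul_eq_mul] at *
        rw [mul_pow, hx, mul_zero] } with hIdef
  have hmap : N.map (Ideal.Quotient.mk I) = 0 := by
    ext p q
    rw [Matrix.map_apply, Matrix.zero_apply, Ideal.Quotient.eq_zero_iff_mem]
    exact hN p q
  have hcp0 : (0 : Matrix (Fin s) (Fin s) (S ⧸ I)).charpoly = X ^ s := by
    have hdiag : Matrix.charmatrix (0 : Matrix (Fin s) (Fin s) (S ⧸ I))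
        = Matrix.diagonal (fun _ => (X : (S ⧸ I)[X])) := by
      ext i j
      by_cases h : i = j
      · subst h; simp
      · simp [Matrix.charmatrix_apply_ne _ _ _ h, Matrix.diagonal_apply_ne _ h]
    rw [Matrix.charpoly, hdiag, Matrix.det_diagonal]
    simp
  have hcoeff : ∀ i, i < s → N.charpoly.coeff i ^ 2 = 0 := by
    intro i hi
    have h1 : N.charpoly.map (Ideal.Quotient.mk I) = X ^ s := by
      rw [← Matrix.charpoly_map, hmap, hcp0]
    have h2' : Ideal.Quotient.mk I (N.charpoly.coeff i) = 0 := by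
      have := congrArg (fun p => Polynomial.coeff p i) h1
      simpa [Polynomial.coeff_map, Polynomial.coeff_X_pow, Nat.ne_of_lt hi] using this
    exact Ideal.Quotient.eq_zero_iff_mem.mp h2'
  have hdeg : N.charpoly.natDegree = s := by
    rw [Matrix.charpoly_natDegree_eq_dim, Fintype.card_fin]
  have hmonic := N.charpoly_monic
  set q : S[X] := N.charpoly - X ^ s with hq
  have hqcoeff : ∀ i, q.coeff i ^ 2 = 0 := by
    intro i
    rcases lt_trichotomy i s with h | h | h
    · have : q.coeff i = N.charpoly.coeff i := by
        simp [hq, Polynomial.coeff_X_pow, Nat.ne_of_lt h]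
      rw [this]
      exact hcoeff i h
    · subst h
      have : q.coeff i = 0 := by
        have hc : N.charpoly.coeff i = 1 := by
          have := hmonic.coeff_natDegree
          rwa [hdeg] at this
        simp [hq, Polynomial.coeff_X_pow, hc]
      simp [this]
    · have : q.coeff i = 0 := by
        have hc : N.charpoly.coeff i = 0 :=
          Polynomial.coeff_eq_zero_of_natDegree_lt (by omega)
        simp [hq, Polynomial.coeff_X_pow, hc, Nat.ne_of_gt h]
      simp [this]
  have hqdeg : q.natDegree < s + 1 := by
    rw [hq]
    have h := Polynomial.natDegree_sub_le N.charpoly (X ^ s : S[X])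
    rw [Polynomial.natDegree_X_pow, hdeg, max_self] at h
    omega
  have h2X : (2 : S[X]) = 0 := by
    have : (2 : S[X]) = Polynomial.C (2 : S) := (map_ofNat (Polynomial.C : S →+* S[X]) 2).symm
    rw [this, h2, map_zero]
  have hq2 : q ^ 2 = 0 := by
    conv_lhs => rw [q.as_sum_range' (s + 1) hqdeg]
    rw [sq_sum_of_two_eq_zero h2X]
    refine Finset.sum_eq_zero fun i _ => ?_
    rw [Polynomial.monomial_pow, hqcoeff i, Polynomial.monomial_zero_right]
  have CH := Matrix.aeval_self_charpoly N
  have hsplit : N.charpoly = X ^ s + q := by rw [hq]; ring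
  rw [hsplit, map_add, Polynomial.aeval_X_pow] at CH
  have hNs : N ^ s = -Polynomial.aeval N q := eq_neg_of_add_eq_zero_left CH
  calc N ^ (2 * s) = (N ^ s) ^ 2 := by rw [mul_comm, pow_mul]
    _ = Polynomial.aeval N q ^ 2 := by rw [hNs, neg_sq]
    _ = Polynomial.aeval N (q ^ 2) := (map_pow _ _ _).symm
    _ = 0 := by rw [hq2, map_zero]

private theorem block_hadamard_aux (R : Type*) [CommRing R] (h2R : (2 : R) = 0)
    (G : Type*) [AddCommGroup G] [Fintype G] [DecidableEq G] (hG : ∀ g : G, g + g = 0)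
    (s : ℕ) (M : Matrix (Fin s × G) (Fin s × G) R) (a : Fin s → Fin s → G → R)
    (hM : ∀ p q (i j : G), M (p, i) (q, j) = a p q (i + j))
    (ha : ∀ p q, ∑ g, a p q g = 0) :
    M ^ (2 * s) = 0 := by
  set S := AddMonoidAlgebra R G with hSdef
  have h2S : (2 : S) = 0 := by
    have : (2 : S) = algebraMap R S 2 := (map_ofNat (algebraMap R S) 2).symm
    rw [this, h2R, map_zero]
  set P : G → Matrix G G R := fun g => Matrix.of fun i j => if i + j = g then 1 else 0 with hPdef
  have hP1 : P 0 = 1 := by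
    ext i j
    rw [Matrix.one_apply]
    simp only [hPdef, Matrix.of_apply]
    congr 1
    refine propext ⟨fun h => ?_, fun h => by rw [h, hG]⟩
    have := congrArg (· + j) h
    simpa [add_assoc, hG j] using this
  have hPmul : ∀ g h : G, P (g + h) = P g * P h := by
    intro g h
    ext i j
    rw [Matrix.mul_apply]
    simp only [hPdef, Matrix.of_apply]
    have key : ∀ m : G, (if i + m = g then (1 : R) else 0) * (if m + j = h then 1 else 0)
        = if m = i + g then (if i + j = g + h then 1 else 0) else 0 := by
      intro m
      by_cases hm : m = i + g
      · subst hm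
        have c1 : i + (i + g) = g := by rw [← add_assoc, hG i, zero_add]
        have e : g + ((i + g) + j) = i + j := by
          rw [← add_assoc, ← add_assoc, add_comm g i, add_assoc i g g, hG g, add_zero]
        have c2 : ((i + g) + j = h) ↔ (i + j = g + h) := by
          rw [← e]
          exact (add_right_inj g).symm
        simp [c1, c2]
      · have hne : ¬(i + m = g) := by
          intro hh
          apply hm
          rw [← hh, ← add_assoc, hG i, zero_add]
        simp [hne, hm]
    rw [Finset.sum_congr rfl fun m _ => key m, Finset.sum_ite_eq' Finset.univ (i + g)]
    simp
  set F : Multiplicative G →* Matrix G G R :=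
    { toFun := fun g => P g.toAdd
      map_one' := hP1
      map_mul' := fun g h => hPmul g.toAdd h.toAdd } with hFdef
  set ψ : S →ₐ[R] Matrix G G R := AddMonoidAlgebra.lift R (Matrix G G R) G F with hψdef
  set N : Matrix (Fin s) (Fin s) S :=
    Matrix.of fun p q => ∑ g, AddMonoidAlgebra.single g (a p q g) with hNdef
  have hψsingle : ∀ (g : G) (r : R), ψ (AddMonoidAlgebra.single g r) = r • P g := by
    intro g r
    rw [hψdef, AddMonoidAlgebra.lift_single]
    rfl
  have hNsq : ∀ p q, N p q ^ 2 = 0 := by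
    intro p q
    show (∑ g, AddMonoidAlgebra.single g (a p q g)) ^ 2 = 0
    rw [sq_sum_of_two_eq_zero h2S]
    have step : ∀ g : G, (AddMonoidAlgebra.single g (a p q g) : S) ^ 2
        = AddMonoidAlgebra.single (0 : G) (a p q g ^ 2) := by
      intro g
      rw [sq, AddMonoidAlgebra.single_mul_single, hG g, sq]
    rw [Finset.sum_congr rfl fun g _ => step g]
    have hsum : (∑ g : G, AddMonoidAlgebra.single (0 : G) (a p q g ^ 2) : S)
        = AddMonoidAlgebra.single (0 : G) (∑ g : G, a p q g ^ 2) :=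
      (map_sum (AddMonoidAlgebra.singleAddHom (0 : G)) (fun g : G => a p q g ^ 2) Finset.univ).symm
    rw [hsum]
    have hz : ∑ g : G, a p q g ^ 2 = 0 := by
      rw [← sq_sum_of_two_eq_zero h2R, ha p q]
      simp
    rw [hz]
    simp
  set Φ : Matrix (Fin s) (Fin s) S →+* Matrix (Fin s × G) (Fin s × G) R :=
    ((Matrix.compRingEquiv (Fin s) G R : Matrix (Fin s) (Fin s) (Matrix G G R) ≃+*
        Matrix (Fin s × G) (Fin s × G) R) : Matrix (Fin s) (Fin s) (Matrix G G R) →+*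
        Matrix (Fin s × G) (Fin s × G) R).comp (ψ.toRingHom.mapMatrix) with hΦdef
  have hΦN : Φ N = M := by
    ext ⟨p, i⟩ ⟨q, j⟩
    have h1 : Φ N (p, i) (q, j) = ψ (N p q) i j := by
      rfl
    rw [h1, hM]
    show ψ (∑ g, AddMonoidAlgebra.single g (a p q g)) i j = a p q (i + j)
    rw [map_sum, Matrix.sum_apply]
    have h2 : ∀ g : G, (ψ (AddMonoidAlgebra.single g (a p q g))) i j
        = if g = i + j then a p q g else 0 := by
      intro g
      rw [hψsingle, Matrix.smul_apply]
      simp only [hPdef, Matrix.of_apply, smul_eq_mul, mul_boole]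
      congr 1
      exact propext ⟨fun h => h.symm, fun h => h.symm⟩
    rw [Finset.sum_congr rfl fun g _ => h2 g, Finset.sum_ite_eq' Finset.univ (i + j)]
    simp
  have key := matrix_pow_eq_zero_of_sq_entries h2S N hNsq
  calc M ^ (2 * s) = Φ N ^ (2 * s) := by rw [hΦN]
    _ = Φ (N ^ (2 * s)) := (map_pow Φ N (2 * s)).symm
    _ = 0 := by rw [key, map_zero]

end Aux

/-- If `M` is an `s × s` block matrix over a commutative ring `R` of characteristic 2, all of
whose blocks are Hadamard matrices with eigenvalue zero, then `M ^ (2 * s) = 0`. -/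
theorem block_hadamard_eigenvalue_zero_pow (k s : ℕ) (R : Type*) [CommRing R] [CharP R 2]
    (M : Matrix (Fin s × (Fin k → ZMod 2)) (Fin s × (Fin k → ZMod 2)) R)
    (a : Fin s → Fin s → (Fin k → ZMod 2) → R)
    (hM : ∀ p q (i j : Fin k → ZMod 2), M (p, i) (q, j) = a p q (i + j))
    (ha : ∀ p q, ∑ g, a p q g = 0) :
    M ^ (2 * s) = 0 := by
  have h2R : (2 : R) = 0 := by
    have := CharP.cast_eq_zero R 2
    simpa using this
  have hG : ∀ g : Fin k → ZMod 2, g + g = 0 := by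
    intro g
    funext i
    have : ∀ x : ZMod 2, x + x = 0 := by decide
    exact this (g i)
  exact block_hadamard_aux R h2R (Fin k → ZMod 2) hG s M a hM ha
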